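/- arXiv:0912.3936 — 5 statements merged into one kernel-verified Lean document; each statement's English description precedes it below -/
import Mathlib

section
/- Let g : ℂ × ℝ^m → ℂ be uniformly continuous in ε for all ε in a ball U_{ε₀}(0) and k in a ball U_R(k₀), holomorphic in k on U_R(k₀) for each such ε, and suppose that g(k,ε) → (k - k₀)^d uniformly as ε → 0. Then there exist δ > 0 and ε₀' > 0 such that for every ε ∈ U_{ε₀'}(0) the sum of multiplicities of zeros of g(·,ε) in U_δ(k₀) equals d. -/
open Metric

namespace ZerosCountAux

open Complex Set Filter
open scoped NNReal ENNReal

noncomputable section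

def circ (k₀ : ℂ) (ρ : ℝ) (θ : ℝ) : ℂ := k₀ + ρ * Complex.exp (θ * Complex.I)

def CircLift (k₀ : ℂ) (ρ : ℝ) (F : ℂ → ℂ) (n : ℤ) : Prop :=
  ∃ L : ℝ → ℂ, ContinuousOn L (Set.Icc 0 (2*Real.pi)) ∧
    (∀ θ ∈ Set.Icc 0 (2*Real.pi), Complex.exp (L θ) = F (circ k₀ ρ θ)) ∧
    L (2*Real.pi) - L 0 = n * (2*Real.pi*Complex.I)

variable {k₀ : ℂ} {ρ : ℝ}

lemma circ_mem_sphere (hρ : 0 ≤ ρ) (θ : ℝ) : circ k₀ ρ θ ∈ sphere k₀ ρ := by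
  rw [mem_sphere_iff_norm]
  have h1 : circ k₀ ρ θ - k₀ = ρ * Complex.exp (θ * Complex.I) := by simp [circ]
  rw [h1, norm_mul]
  simp [Complex.norm_exp, _root_.abs_of_nonneg hρ]

lemma circ_ne (hρ : 0 < ρ) (θ : ℝ) : circ k₀ ρ θ - k₀ ≠ 0 := by
  have h := circ_mem_sphere (k₀ := k₀) hρ.le θ
  rw [mem_sphere_iff_norm] at h
  intro h0
  rw [h0, norm_zero] at h
  exact hρ.ne h

lemma circ_endpoint : circ k₀ ρ (2*Real.pi) = circ k₀ ρ 0 := by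
  have h1 : ((2*Real.pi : ℝ) : ℂ) * Complex.I = 2 * ↑Real.pi * Complex.I := by push_cast; ring
  simp [circ, h1, Complex.exp_two_pi_mul_I]

lemma continuous_circ : Continuous (circ k₀ ρ) := by
  unfold circ; fun_prop

/-- An integer-valued continuous function on an interval is constant (endpoints agree). -/
lemma int_valued_const {T : ℝ} (hT : 0 ≤ T) (D : ℝ → ℂ)
    (hD : ContinuousOn D (Set.Icc 0 T))
    (hint : ∀ θ ∈ Set.Icc 0 T, ∃ n : ℤ, D θ = n) : D 0 = D T := by
  obtain ⟨n₀, h₀⟩ := hint 0 ⟨le_refl 0, hT⟩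
  obtain ⟨n₁, h₁⟩ := hint T ⟨hT, le_refl T⟩
  rw [h₀, h₁]
  have hcont : ContinuousOn (fun θ => (D θ).re) (Set.uIcc 0 T) := by
    rw [Set.uIcc_of_le hT]
    exact Complex.continuous_re.comp_continuousOn hD
  have hsurj := ContinuousOn.surjOn_uIcc hcont (Set.left_mem_uIcc) (Set.right_mem_uIcc)
  have key : ∀ a b : ℤ, a < b →
      Set.uIcc ((D 0).re) ((D T).re) = Set.uIcc (a:ℝ) (b:ℝ) → False := by
    intro a b hab huicc
    have hab' : (a:ℝ) + 1 ≤ b := by exact_mod_cast hab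
    have hc1 : (a:ℝ) + 1/2 ∈ Set.uIcc ((D 0).re) ((D T).re) := by
      rw [huicc, Set.uIcc_of_le (by linarith : (a:ℝ) ≤ b)]
      exact ⟨by linarith, by linarith⟩
    obtain ⟨θ, hθ, hθ2⟩ := hsurj hc1
    rw [Set.uIcc_of_le hT] at hθ
    obtain ⟨m, hm⟩ := hint θ hθ
    simp only [hm, Complex.intCast_re] at hθ2
    have h2 : (2*m : ℝ) = 2*a + 1 := by linarith
    have h3 : (2*m : ℤ) = 2*a + 1 := by exact_mod_cast h2
    omega
  by_contra hne
  have hne' : n₀ ≠ n₁ := fun h => hne (by rw [h])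
  rcases lt_or_gt_of_ne hne' with hlt | hlt
  · exact key n₀ n₁ hlt (by rw [h₀, h₁]; simp)
  · exact key n₁ n₀ hlt (by rw [h₀, h₁, Set.uIcc_comm]; simp)

lemma two_pi_I_ne : (2*Real.pi*Complex.I : ℂ) ≠ 0 := by
  simp [Complex.ext_iff, Real.pi_ne_zero]

lemma CircLift.unique {F : ℂ → ℂ} {n n' : ℤ} (h : CircLift k₀ ρ F n)
    (h' : CircLift k₀ ρ F n') : n = n' := by
  obtain ⟨L, hL, hLe, hLn⟩ := h
  obtain ⟨L', hL', hLe', hLn'⟩ := h'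
  have h2π : (0:ℝ) ≤ 2*Real.pi := by positivity
  have h2πI := two_pi_I_ne
  have hint : ∀ θ ∈ Set.Icc 0 (2*Real.pi), ∃ m : ℤ,
      (L θ - L' θ) / (2*Real.pi*Complex.I) = m := by
    intro θ hθ
    have hF0 : F (circ k₀ ρ θ) ≠ 0 := by rw [← hLe θ hθ]; exact Complex.exp_ne_zero _
    have he : Complex.exp (L θ - L' θ) = 1 := by
      rw [Complex.exp_sub, hLe θ hθ, hLe' θ hθ, div_self hF0]
    rw [Complex.exp_eq_one_iff] at he
    obtain ⟨m, hm⟩ := he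
    refine ⟨m, ?_⟩
    rw [hm]
    exact mul_div_cancel_right₀ _ h2πI
  have hcont : ContinuousOn (fun θ => (L θ - L' θ) / (2*Real.pi*Complex.I))
      (Set.Icc 0 (2*Real.pi)) := (hL.sub hL').div_const _
  have hconst := int_valued_const h2π _ hcont hint
  have heq : L 0 - L' 0 = L (2*Real.pi) - L' (2*Real.pi) := by
    rw [div_eq_div_iff h2πI h2πI] at hconst
    exact mul_right_cancel₀ h2πI hconst
  have hfin : (n : ℂ) * (2*Real.pi*Complex.I) = n' * (2*Real.pi*Complex.I) := by
    linear_combination -hLn + hLn' - heq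
  have := mul_right_cancel₀ h2πI hfin
  exact_mod_cast this

lemma CircLift.mul {F G : ℂ → ℂ} {n m : ℤ} (hF : CircLift k₀ ρ F n)
    (hG : CircLift k₀ ρ G m) : CircLift k₀ ρ (fun z => F z * G z) (n + m) := by
  obtain ⟨L, hL, hLe, hLn⟩ := hF
  obtain ⟨L', hL', hLe', hLn'⟩ := hG
  refine ⟨fun θ => L θ + L' θ, hL.add hL', fun θ hθ => ?_, ?_⟩
  · rw [Complex.exp_add, hLe θ hθ, hLe' θ hθ]
  · rw [show L (2*Real.pi) + L' (2*Real.pi) - (L 0 + L' 0)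
        = (L (2*Real.pi) - L 0) + (L' (2*Real.pi) - L' 0) by ring, hLn, hLn']
    push_cast; ring

lemma CircLift.congr {F G : ℂ → ℂ} {n : ℤ} (hρ : 0 ≤ ρ)
    (h : ∀ z ∈ sphere k₀ ρ, F z = G z) (hF : CircLift k₀ ρ F n) : CircLift k₀ ρ G n := by
  obtain ⟨L, hL, hLe, hLn⟩ := hF
  exact ⟨L, hL, fun θ hθ => by rw [hLe θ hθ, h _ (circ_mem_sphere hρ θ)], hLn⟩

lemma circLift_const {c : ℂ} (hc : c ≠ 0) : CircLift k₀ ρ (fun _ => c) 0 :=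
  ⟨fun _ => Complex.log c, continuousOn_const, fun θ _ => Complex.exp_log hc, by simp⟩

lemma circLift_base (hρ : 0 < ρ) : CircLift k₀ ρ (fun z => z - k₀) 1 := by
  refine ⟨fun θ => (Real.log ρ : ℂ) + θ * Complex.I, by fun_prop, fun θ _ => ?_,
    by push_cast; ring⟩
  rw [Complex.exp_add]
  simp only [circ, add_sub_cancel_left]
  congr 1
  rw [← Complex.ofReal_exp, Real.exp_log hρ]

/-- A function whose values on the circle lie in the ball of radius 1 around 1 has
zero winding. -/
lemma circLift_slit (hρ : 0 ≤ ρ) {G : ℂ → ℂ} (hG : ContinuousOn G (sphere k₀ ρ))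
    (h1 : ∀ z ∈ sphere k₀ ρ, ‖G z - 1‖ < 1) : CircLift k₀ ρ G 0 := by
  have hslit : ∀ z ∈ sphere k₀ ρ, G z ∈ Complex.slitPlane := by
    intro z hz
    apply Complex.mem_slitPlane_iff.2
    left
    have h3 : -1 < (G z - 1).re :=
      (abs_lt.1 (lt_of_le_of_lt (Complex.abs_re_le_norm _) (h1 z hz))).1
    rw [Complex.sub_re, Complex.one_re] at h3
    linarith
  refine ⟨fun θ => Complex.log (G (circ k₀ ρ θ)), ?_, fun θ hθ => ?_, ?_⟩
  · apply ContinuousOn.clog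
    · exact hG.comp continuous_circ.continuousOn (fun θ _ => circ_mem_sphere hρ θ)
    · exact fun θ _ => hslit _ (circ_mem_sphere hρ θ)
  · exact Complex.exp_log (Complex.slitPlane_ne_zero (hslit _ (circ_mem_sphere hρ θ)))
  · show Complex.log (G (circ k₀ ρ (2*Real.pi))) - Complex.log (G (circ k₀ ρ 0)) = _
    rw [circ_endpoint]; simp

lemma sphere_sub_ne (hρ : 0 < ρ) {z : ℂ} (hz : z ∈ sphere k₀ ρ) : z - k₀ ≠ 0 := by
  rw [mem_sphere_iff_norm] at hz
  intro h0
  rw [h0, norm_zero] at hz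
  exact hρ.ne hz

lemma sphere_abs (hρ : 0 < ρ) {z : ℂ} (hz : z ∈ sphere k₀ ρ) :
    ‖z - k₀‖ = ρ := by
  rw [mem_sphere_iff_norm] at hz
  exact hz

lemma circLift_linear_in (hρ : 0 < ρ) {w : ℂ} (hw : dist w k₀ < ρ) :
    CircLift k₀ ρ (fun z => z - w) 1 := by
  have hG : CircLift k₀ ρ (fun z => (z - w)/(z - k₀)) 0 := by
    apply circLift_slit hρ.le
    · exact (continuous_id.sub continuous_const).continuousOn.div
        (continuous_id.sub continuous_const).continuousOn
        (fun z hz => sphere_sub_ne hρ hz)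
    · intro z hz
      have hz0 := sphere_sub_ne hρ hz
      have h2 : (z - w)/(z - k₀) - 1 = (k₀ - w)/(z - k₀) := by
        rw [div_sub_one hz0]; ring_nf
      rw [h2, norm_div, sphere_abs hρ hz, div_lt_one hρ]
      rw [Complex.dist_eq] at hw
      rwa [norm_sub_rev]
  have h1 := (circLift_base hρ).mul hG
  rw [add_zero] at h1
  refine CircLift.congr hρ.le (fun z hz => ?_) h1
  field_simp [sphere_sub_ne hρ hz]

lemma circLift_linear_out (hρ : 0 < ρ) {w : ℂ} (hw : ρ < dist w k₀) :
    CircLift k₀ ρ (fun z => z - w) 0 := by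
  have hkw : k₀ - w ≠ 0 := by
    intro h0
    rw [Complex.dist_eq, norm_sub_rev, h0] at hw
    simp at hw
    linarith
  have hG : CircLift k₀ ρ (fun z => (z - w)/(k₀ - w)) 0 := by
    apply circLift_slit hρ.le
    · exact ((continuous_id.sub continuous_const).continuousOn).div_const _
    · intro z hz
      have h2 : (z - w)/(k₀ - w) - 1 = (z - k₀)/(k₀ - w) := by
        rw [div_sub_one hkw]; ring_nf
      rw [h2, norm_div, sphere_abs hρ hz, div_lt_one (by
        have := norm_pos_iff.2 hkw
        exact this)]
      rw [Complex.dist_eq, norm_sub_rev] at hw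
      exact hw
  have h1 := (circLift_const hkw).mul hG
  rw [add_zero] at h1
  refine CircLift.congr hρ.le (fun z hz => ?_) h1
  field_simp

lemma CircLift.pow {F : ℂ → ℂ} {n : ℤ} (hF : CircLift k₀ ρ F n) (m : ℕ) :
    CircLift k₀ ρ (fun z => F z ^ m) (m * n) := by
  induction m with
  | zero => simpa using circLift_const one_ne_zero
  | succ k ih =>
      have h1 := hF.mul ih
      have h2 : (fun z => F z ^ (k+1)) = fun z => F z * F z ^ k := by
        funext z; rw [pow_succ]; ring
      have h3 : ((k+1:ℕ):ℤ)*n = n + (k:ℤ)*n := by push_cast; ring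
      rw [h2, h3]
      exact h1

lemma circLift_multiset (hρ : 0 < ρ) (s : Multiset ℂ) (hs : ∀ w ∈ s, ρ < dist w k₀) :
    CircLift k₀ ρ (fun z => (s.map (fun w => z - w)).prod) 0 := by
  induction s using Multiset.induction_on with
  | empty => simpa using circLift_const one_ne_zero
  | cons w s ih =>
      have h1 := (circLift_linear_out hρ (hs w (Multiset.mem_cons_self w s))).mul
        (ih fun v hv => hs v (Multiset.mem_cons_of_mem hv))
      have h2 : (fun z => ((w ::ₘ s).map (fun v => z - v)).prod)
          = fun z => (z - w) * ((s.map (fun v => z - v)).prod) := by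
        funext z; simp
      rw [h2]
      simpa using h1

lemma circLift_finset (hρ : 0 < ρ) (Z : Finset ℂ) (mult : ℂ → ℕ)
    (hz : ∀ w ∈ Z, dist w k₀ < ρ) :
    CircLift k₀ ρ (fun z => ∏ w ∈ Z, (z - w)^(mult w)) ((Z.sum mult : ℕ) : ℤ) := by
  classical
  induction Z using Finset.induction_on with
  | empty => simpa using circLift_const one_ne_zero
  | @insert a s ha ih =>
      have h1 := ((circLift_linear_in hρ (hz a (Finset.mem_insert_self a s))).pow
        (mult a)).mul (ih fun w hw => hz w (Finset.mem_insert_of_mem hw))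
      have h2 : (fun z => ∏ w ∈ insert a s, (z - w)^(mult w))
          = fun z => (z - a)^(mult a) * ∏ w ∈ s, (z - w)^(mult w) := by
        funext z; rw [Finset.prod_insert ha]
      rw [h2, Finset.sum_insert ha]
      have h3 : ((mult a + s.sum mult : ℕ) : ℤ) = (mult a : ℤ) * 1 + (s.sum mult : ℕ) := by
        push_cast; ring
      rw [h3]
      exact h1

/-- Zeros of a non-trivial holomorphic function clustering in a compact subdisk are finite. -/
lemma zeros_finite {R δ : ℝ} {f : ℂ → ℂ} (hδ : 0 < δ) (hδR : δ < R)
    (hf : DifferentiableOn ℂ f (ball k₀ R))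
    (hzl : ∀ z ∈ ball k₀ R, f z = 0 → z ∈ closedBall k₀ δ)
    (hnz : ∃ z ∈ ball k₀ R, f z ≠ 0) :
    {z | z ∈ ball k₀ R ∧ f z = 0}.Finite := by
  have hsub : closedBall k₀ δ ⊆ ball k₀ R := closedBall_subset_ball hδR
  set S := {z | z ∈ ball k₀ R ∧ f z = 0} with hS
  have hSeq : S = closedBall k₀ δ ∩ f ⁻¹' {0} := by
    ext z
    constructor
    · intro hz; exact ⟨hzl z hz.1 hz.2, hz.2⟩
    · intro hz; exact ⟨hsub hz.1, hz.2⟩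
  have hScompact : IsCompact S := by
    rw [hSeq]
    apply (isCompact_closedBall k₀ δ).of_isClosed_subset
    · exact ContinuousOn.preimage_isClosed_of_isClosed
        (hf.continuousOn.mono hsub) isClosed_closedBall isClosed_singleton
    · exact Set.inter_subset_left
  have han : AnalyticOnNhd ℂ f (ball k₀ R) := hf.analyticOnNhd isOpen_ball
  have hiso : ∀ z ∈ S, ∀ᶠ w in nhds z, w = z ∨ f w ≠ 0 := by
    intro z hz
    rcases (han z hz.1).eventually_eq_zero_or_eventually_ne_zero with hev | hev
    · exfalso
      have hfreq : ∃ᶠ w in nhdsWithin z {z}ᶜ, f w = 0 :=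
        (hev.filter_mono nhdsWithin_le_nhds).frequently
      have := han.eqOn_zero_of_preconnected_of_frequently_eq_zero
        (convex_ball k₀ R).isPreconnected hz.1 hfreq
      obtain ⟨z', hz', hz'0⟩ := hnz
      exact hz'0 (this hz')
    · rw [eventually_nhdsWithin_iff] at hev
      filter_upwards [hev] with w hw
      rcases eq_or_ne w z with h | h
      · exact Or.inl h
      · exact Or.inr (hw h)
  obtain ⟨t, _, hcover⟩ := hScompact.elim_nhds_subcover
    (fun z => {w | w = z ∨ f w ≠ 0}) (fun z hz => hiso z hz)
  apply Set.Finite.subset t.finite_toSet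
  intro w hw
  obtain ⟨z, hzt, hwz⟩ := Set.mem_iUnion₂.1 (hcover hw)
  rcases hwz with h | h
  · rwa [h]
  · exact absurd hw.2 h

/-- Global factorization of a holomorphic function with finitely many zeros on a disk. -/
lemma factorization {R δ : ℝ} (hδ : 0 < δ) (hδR : δ < R) :
    ∀ n : ℕ, ∀ f : ℂ → ℂ,
    DifferentiableOn ℂ f (ball k₀ R) →
    (∀ z ∈ ball k₀ R, f z = 0 → z ∈ ball k₀ δ) →
    ∀ (hfin : {z | z ∈ ball k₀ R ∧ f z = 0}.Finite), hfin.toFinset.card ≤ n →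
    ∃ (Z : Finset ℂ) (mult : ℂ → ℕ) (u : ℂ → ℂ),
      (∀ z ∈ Z, z ∈ ball k₀ δ) ∧
      (∀ z ∈ ball k₀ R, (f z = 0 ↔ z ∈ Z)) ∧
      (∀ z ∈ Z, 0 < mult z) ∧
      DifferentiableOn ℂ u (ball k₀ R) ∧ (∀ z ∈ ball k₀ R, u z ≠ 0) ∧
      (∀ z ∈ ball k₀ R, f z = (∏ w ∈ Z, (z - w)^(mult w)) * u z) := by
  intro n
  induction n with
  | zero =>
      intro f hf hzl hfin hcard
      refine ⟨∅, fun _ => 0, f, by simp, fun z hz => ?_, by simp, hf, fun z hz => ?_, by simp⟩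
      · simp only [Finset.notMem_empty, iff_false]
        intro h0
        have : z ∈ hfin.toFinset := hfin.mem_toFinset.2 ⟨hz, h0⟩
        have := Finset.card_pos.2 ⟨z, this⟩
        omega
      · intro h0
        have : z ∈ hfin.toFinset := hfin.mem_toFinset.2 ⟨hz, h0⟩
        have := Finset.card_pos.2 ⟨z, this⟩
        omega
  | succ n ih =>
      intro f hf hzl hfin hcard
      rcases Set.eq_empty_or_nonempty {z | z ∈ ball k₀ R ∧ f z = 0} with hS | hS
      · refine ⟨∅, fun _ => 0, f, by simp, fun z hz => ?_, by simp, hf, fun z hz => ?_, by simp⟩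
        · simp only [Finset.notMem_empty, iff_false]
          intro h0
          exact absurd (Set.mem_setOf.2 ⟨hz, h0⟩) (hS ▸ Set.notMem_empty z)
        · intro h0
          exact absurd (Set.mem_setOf.2 ⟨hz, h0⟩) (hS ▸ Set.notMem_empty z)
      · obtain ⟨z₁, hz₁⟩ := hS
        have hz₁R : z₁ ∈ ball k₀ R := hz₁.1
        have han : AnalyticAt ℂ f z₁ := hf.analyticAt (isOpen_ball.mem_nhds hz₁R)
        have hnev : ¬ ∀ᶠ z in nhds z₁, f z = 0 := by
          intro hev
          have hinf : ({z | z ∈ ball k₀ R ∧ f z = 0} : Set ℂ).Infinite := by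
            apply Set.Infinite.mono (s := {z | z ∈ ball k₀ R ∧ f z = 0})
              (h := fun z hz => hz)
            have hmem : {z | z ∈ ball k₀ R ∧ f z = 0} ∈ nhds z₁ := by
              filter_upwards [hev, isOpen_ball.mem_nhds hz₁R] with w h1 h2
              exact ⟨h2, h1⟩
            exact infinite_of_mem_nhds z₁ hmem
          exact hinf hfin
        obtain ⟨m₁, h, hh, hh0, heq⟩ := han.exists_eventuallyEq_pow_smul_nonzero_iff.2 hnev
        have hm₁ : 0 < m₁ := by
          rcases Nat.eq_zero_or_pos m₁ with h0 | h0
          · exfalso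
            have := heq.self_of_nhds
            rw [h0, pow_zero, one_smul, hz₁.2] at this
            exact hh0 this.symm
          · exact h0
        set f₁ : ℂ → ℂ := fun z => if z = z₁ then h z₁ else f z / (z - z₁)^m₁ with hf₁
        have hfeq : ∀ z ∈ ball k₀ R, f z = (z - z₁)^m₁ * f₁ z := by
          intro z hz
          rcases eq_or_ne z z₁ with h1 | h1
          · subst h1
            rw [hz₁.2]
            simp [hf₁, zero_pow hm₁.ne']
          · have hne : (z - z₁)^m₁ ≠ 0 := pow_ne_zero _ (sub_ne_zero.2 h1)
            simp only [hf₁, if_neg h1]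
            field_simp
        have hf₁h : f₁ =ᶠ[nhds z₁] h := by
          filter_upwards [heq] with w hw
          rcases eq_or_ne w z₁ with h1 | h1
          · simp [hf₁, h1]
          · have hne : (w - z₁)^m₁ ≠ 0 := pow_ne_zero _ (sub_ne_zero.2 h1)
            simp only [hf₁, if_neg h1, hw, smul_eq_mul]
            field_simp
        have hf₁d : DifferentiableOn ℂ f₁ (ball k₀ R) := by
          intro z hz
          rcases eq_or_ne z z₁ with h1 | h1
          · subst h1
            exact ((hh.congr hf₁h.symm).differentiableAt).differentiableWithinAt
          · have hev : f₁ =ᶠ[nhds z] fun w => f w / (w - z₁)^m₁ := by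
              filter_upwards [isOpen_ne.mem_nhds h1] with w hw
              simp only [hf₁, if_neg hw]
            have hd : DifferentiableAt ℂ (fun w => f w / (w - z₁)^m₁) z := by
              apply DifferentiableAt.div
              · exact hf.differentiableAt (isOpen_ball.mem_nhds hz)
              · exact ((differentiableAt_id.sub (differentiableAt_const _)).pow m₁)
              · exact pow_ne_zero _ (sub_ne_zero.2 h1)
            exact (hev.differentiableAt_iff.2 hd).differentiableWithinAt
        have hf₁z₁ : f₁ z₁ ≠ 0 := by
          simpa [hf₁] using hh0
        have hzeros₁ : {z | z ∈ ball k₀ R ∧ f₁ z = 0}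
            = {z | z ∈ ball k₀ R ∧ f z = 0} \ {z₁} := by
          ext z
          simp only [Set.mem_setOf_eq, Set.mem_diff, Set.mem_singleton_iff]
          constructor
          · intro ⟨hz, hz0⟩
            have h1 : z ≠ z₁ := fun h => hf₁z₁ (h ▸ hz0)
            refine ⟨⟨hz, ?_⟩, h1⟩
            rw [hfeq z hz, hz0, mul_zero]
          · intro ⟨⟨hz, hz0⟩, h1⟩
            refine ⟨hz, ?_⟩
            have h2 := hfeq z hz
            rw [hz0] at h2
            have hne : (z - z₁)^m₁ ≠ 0 := pow_ne_zero _ (sub_ne_zero.2 h1)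
            rcases mul_eq_zero.1 h2.symm with h3 | h3
            · exact absurd h3 hne
            · exact h3
        have hfin₁ : {z | z ∈ ball k₀ R ∧ f₁ z = 0}.Finite := by
          rw [hzeros₁]; exact hfin.diff
        have hzl₁ : ∀ z ∈ ball k₀ R, f₁ z = 0 → z ∈ ball k₀ δ := by
          intro z hz hz0
          have : z ∈ {z | z ∈ ball k₀ R ∧ f₁ z = 0} := ⟨hz, hz0⟩
          rw [hzeros₁] at this
          exact hzl z hz this.1.2
        have hcard₁ : hfin₁.toFinset.card ≤ n := by
          have hsub : hfin₁.toFinset ⊆ hfin.toFinset.erase z₁ := by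
            intro w hw
            rw [Set.Finite.mem_toFinset] at hw
            rw [hzeros₁] at hw
            exact Finset.mem_erase.2 ⟨hw.2, hfin.mem_toFinset.2 hw.1⟩
          calc hfin₁.toFinset.card ≤ (hfin.toFinset.erase z₁).card :=
                Finset.card_le_card hsub
            _ = hfin.toFinset.card - 1 :=
                Finset.card_erase_of_mem (hfin.mem_toFinset.2 hz₁)
            _ ≤ n := by omega
        obtain ⟨Z₁, mult₁, u, hZ₁δ, hZ₁iff, hmult₁, hud, hunz, hufact⟩ :=
          ih f₁ hf₁d hzl₁ hfin₁ hcard₁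
        have hz₁Z₁ : z₁ ∉ Z₁ := fun h => hf₁z₁ ((hZ₁iff z₁ hz₁R).2 h)
        classical
        refine ⟨insert z₁ Z₁, fun z => if z = z₁ then m₁ else mult₁ z, u,
          ?_, ?_, ?_, hud, hunz, ?_⟩
        · intro z hz
          rcases Finset.mem_insert.1 hz with h1 | h1
          · exact h1 ▸ hzl z₁ hz₁R hz₁.2
          · exact hZ₁δ z h1
        · intro z hz
          rw [hfeq z hz]
          rw [mul_eq_zero, pow_eq_zero_iff hm₁.ne', sub_eq_zero, Finset.mem_insert,
            hZ₁iff z hz]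
        · intro z hz
          rcases Finset.mem_insert.1 hz with h1 | h1
          · simp [h1, hm₁]
          · have h2 : z ≠ z₁ := fun h => hz₁Z₁ (h ▸ h1)
            simp [if_neg h2, hmult₁ z h1]
        · intro z hz
          have hprod : ∏ w ∈ Z₁, (z - w)^(if w = z₁ then m₁ else mult₁ w)
              = ∏ w ∈ Z₁, (z - w)^(mult₁ w) := by
            apply Finset.prod_congr rfl
            intro w hw
            have : w ≠ z₁ := fun h => hz₁Z₁ (h ▸ hw)
            rw [if_neg this]
          rw [hfeq z hz, hufact z hz, Finset.prod_insert hz₁Z₁]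
          beta_reduce
          rw [if_pos rfl, hprod]
          ring

/-- A polynomial with no roots in the closed disk has zero winding on the circle. -/
lemma circLift_poly (hρ : 0 < ρ) {Q : Polynomial ℂ}
    (hQ : ∀ z ∈ closedBall k₀ ρ, Q.eval z ≠ 0) :
    CircLift k₀ ρ (fun z => Q.eval z) 0 := by
  have hQ0 : Q ≠ 0 := fun h => hQ k₀ (mem_closedBall_self hρ.le) (by simp [h])
  have hsplit := IsAlgClosed.splits Q
  have hfact := hsplit.eq_prod_roots
  have heval : ∀ z : ℂ, Q.eval z
      = Q.leadingCoeff * ((Q.roots.map (fun a => z - a)).prod) := by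
    intro z
    conv_lhs => rw [hfact]
    rw [Polynomial.eval_mul, Polynomial.eval_C, Polynomial.eval_multiset_prod,
      Multiset.map_map]
    congr 2
    apply Multiset.map_congr rfl
    intro a _
    simp
  have hroots : ∀ w ∈ Q.roots, ρ < dist w k₀ := by
    intro w hw
    by_contra hle
    push_neg at hle
    exact hQ w (mem_closedBall.2 hle) (Polynomial.isRoot_of_mem_roots hw)
  have h1 := (circLift_const (Polynomial.leadingCoeff_ne_zero.2 hQ0)).mul
    (circLift_multiset hρ Q.roots hroots)
  rw [add_zero] at h1
  exact CircLift.congr hρ.le (fun z _ => (heval z).symm) h1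

/-- A nonvanishing holomorphic function on a disk has zero winding on interior circles. -/
lemma circLift_unit {R : ℝ} (hρ : 0 < ρ) (hρR : ρ < R) {u : ℂ → ℂ}
    (hu : DifferentiableOn ℂ u (ball k₀ R)) (hnz : ∀ z ∈ ball k₀ R, u z ≠ 0) :
    CircLift k₀ ρ u 0 := by
  -- a minimum of |u| on the closed disk of radius ρ
  have hsub : closedBall k₀ ρ ⊆ ball k₀ R := closedBall_subset_ball hρR
  have hcont : ContinuousOn (fun z => ‖u z‖) (closedBall k₀ ρ) :=
    continuous_norm.comp_continuousOn (hu.continuousOn.mono hsub)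
  obtain ⟨z₀, hz₀, hmin⟩ := (isCompact_closedBall k₀ ρ).exists_isMinOn
    ⟨k₀, mem_closedBall_self hρ.le⟩ hcont
  set μ := ‖u z₀‖ with hμ
  have hμpos : 0 < μ := by
    have := hnz z₀ (hsub hz₀)
    simpa [hμ] using this
  -- Taylor series of u on a slightly smaller disk
  set R₁ : ℝ := (ρ + R)/2 with hR₁
  have hρR₁ : ρ < R₁ := by rw [hR₁]; linarith
  have hR₁R : R₁ < R := by rw [hR₁]; linarith
  have hR₁pos : 0 < R₁ := lt_trans hρ hρR₁
  have hd : DifferentiableOn ℂ u (closedBall k₀ (R₁.toNNReal : ℝ)) := by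
    apply hu.mono
    rw [Real.coe_toNNReal _ hR₁pos.le]
    exact closedBall_subset_ball hR₁R
  have hps := hd.hasFPowerSeriesOnBall (by simpa using hR₁pos)
  set r' : ℝ≥0 := ((ρ + R₁)/2).toNNReal with hr'
  have hr'pos : (0:ℝ) < (ρ + R₁)/2 := by positivity
  have hρr' : ρ < (r' : ℝ) := by
    rw [hr', Real.coe_toNNReal _ hr'pos.le]; linarith
  have hr'R₁ : (r' : ℝ) < R₁ := by
    rw [hr', Real.coe_toNNReal _ hr'pos.le]; linarith
  have htu := hps.tendstoUniformlyOn' (r' := r')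
    (by
      rw [ENNReal.coe_lt_coe]
      rw [← NNReal.coe_lt_coe]
      rwa [Real.coe_toNNReal _ hR₁pos.le])
  rw [Metric.tendstoUniformlyOn_iff] at htu
  obtain ⟨n, hn⟩ := (htu (μ/2) (by positivity)).exists
  set p := cauchyPowerSeries u k₀ (R₁.toNNReal : ℝ≥0) with hp
  -- the Taylor polynomial
  classical
  set q : Polynomial ℂ :=
    ∑ i ∈ Finset.range n, Polynomial.C (p.coeff i) * (Polynomial.X - Polynomial.C k₀)^i
    with hq
  have heval : ∀ z : ℂ, q.eval z = p.partialSum n (z - k₀) := by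
    intro z
    rw [hq, Polynomial.eval_finset_sum]
    unfold FormalMultilinearSeries.partialSum
    apply Finset.sum_congr rfl
    intro i _
    rw [FormalMultilinearSeries.apply_eq_pow_smul_coeff, smul_eq_mul]
    simp [mul_comm]
  have hclose : ∀ z ∈ closedBall k₀ ρ, ‖u z - q.eval z‖ < μ/2 := by
    intro z hz
    have hzball : z ∈ ball k₀ (r' : ℝ) := by
      rcases mem_closedBall.1 hz with h
      exact mem_ball.2 (lt_of_le_of_lt h hρr')
    have := hn z hzball
    rw [dist_eq_norm] at this
    rw [heval]
    simpa using this
  have hqnz : ∀ z ∈ closedBall k₀ ρ, q.eval z ≠ 0 := by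
    intro z hz h0
    have h1 := hclose z hz
    rw [h0, sub_zero] at h1
    have h2 : μ ≤ ‖u z‖ := hmin hz
    linarith
  have hqlift := circLift_poly hρ hqnz
  have hsphere : sphere k₀ ρ ⊆ closedBall k₀ ρ := sphere_subset_closedBall
  have hGlift : CircLift k₀ ρ (fun z => u z / q.eval z) 0 := by
    apply circLift_slit hρ.le
    · apply ContinuousOn.div
      · exact (hu.continuousOn.mono (fun z hz => hsub (hsphere hz)))
      · exact q.continuous.continuousOn
      · exact fun z hz => hqnz z (hsphere hz)
    · intro z hz
      have hq0 := hqnz z (hsphere hz)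
      have h1 : u z / q.eval z - 1 = (u z - q.eval z) / q.eval z := by
        field_simp
      rw [h1, norm_div, div_lt_one (norm_pos_iff.2 hq0)]
      have h2 := hclose z (hsphere hz)
      have h3 : μ ≤ ‖u z‖ := hmin (hsphere hz)
      have h4 : ‖q.eval z‖ ≥ μ/2 := by
        have h5 : ‖u z‖ - ‖q.eval z‖
            ≤ ‖u z - q.eval z‖ := by
          simpa using norm_sub_norm_le (u z) (q.eval z)
        linarith
      calc ‖u z - q.eval z‖ < μ/2 := h2
        _ ≤ ‖q.eval z‖ := h4
  have h1 := hqlift.mul hGlift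
  rw [add_zero] at h1
  refine CircLift.congr hρ.le (fun z hz => ?_) h1
  field_simp [hqnz z (hsphere hz)]

/-- Main counting lemma: a holomorphic function uniformly close to `(z - k₀)^d` on a disk
has exactly `d` zeros counted with multiplicity. -/
lemma count_eq {R : ℝ} {f : ℂ → ℂ} {d : ℕ} (hR : 0 < R)
    (hf : DifferentiableOn ℂ f (ball k₀ R))
    (hclose : ∀ z ∈ ball k₀ R, ‖f z - (z - k₀)^d‖ < (R/4)^d / 2) :
    ∃ (Z : Finset ℂ) (mult : ℂ → ℕ),
      (∀ z ∈ Z, z ∈ ball k₀ (R/4)) ∧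
      (∀ z ∈ ball k₀ R, (f z = 0 ↔ z ∈ Z)) ∧
      (∀ z ∈ Z, 0 < mult z ∧ ∃ h : ℂ → ℂ, AnalyticAt ℂ h z ∧ h z ≠ 0 ∧
        ∀ᶠ w in nhds z, f w = (w - z) ^ (mult z) * h w) ∧
      Z.sum mult = d := by
  set δ := R/4 with hδdef
  set ρ := R/3 with hρdef
  have hδ : 0 < δ := by positivity
  have hρ : 0 < ρ := by positivity
  have hδρ : δ < ρ := by rw [hδdef, hρdef]; linarith
  have hρR : ρ < R := by rw [hρdef]; linarith
  have hδR : δ < R := by linarith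
  have hzl : ∀ z ∈ ball k₀ R, f z = 0 → z ∈ ball k₀ δ := by
    intro z hz h0
    have h1 := hclose z hz
    rw [h0, zero_sub, norm_neg] at h1
    rcases Nat.eq_zero_or_pos d with hd0 | hdpos
    · exfalso
      rw [hd0] at h1
      simp at h1
      linarith
    · have h3 : ‖z - k₀‖^d < δ^d := by
        rw [norm_pow] at h1
        have h5 : (0:ℝ) < δ^d := by positivity
        linarith
      have h4 := lt_of_pow_lt_pow_left₀ d hδ.le h3
      rwa [mem_ball, Complex.dist_eq]
  have hann : ∀ z ∈ ball k₀ R, δ ≤ ‖z - k₀‖ → f z ≠ 0 := by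
    intro z hz hge h0
    have h1 := hzl z hz h0
    rw [mem_ball, Complex.dist_eq] at h1
    linarith
  have habs : ‖(k₀ + (ρ:ℂ)) - k₀‖ = ρ := by
    simp [_root_.abs_of_pos hρ]
  have hmemρ : k₀ + (ρ:ℂ) ∈ ball k₀ R := by
    rw [mem_ball, Complex.dist_eq, habs]; exact hρR
  have hnz : ∃ z ∈ ball k₀ R, f z ≠ 0 :=
    ⟨k₀ + (ρ:ℂ), hmemρ, hann _ hmemρ (by rw [habs]; exact hδρ.le)⟩
  have hfin := zeros_finite hδ hδR hf
    (fun z hz h0 => ball_subset_closedBall (hzl z hz h0)) hnz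
  obtain ⟨Z, mult, u, hZδ, hZiff, hmultpos, hud, hunz, hufact⟩ :=
    factorization hδ hδR hfin.toFinset.card f hf hzl hfin le_rfl
  have hsphereR : sphere k₀ ρ ⊆ ball k₀ R := fun z hz => by
    rw [mem_sphere] at hz; rw [mem_ball, hz]; exact hρR
  have liftd : CircLift k₀ ρ f (d : ℤ) := by
    have hbase := (circLift_base (k₀ := k₀) hρ).pow d
    have hratio : CircLift k₀ ρ (fun z => f z / (z - k₀)^d) 0 := by
      apply circLift_slit hρ.le
      · apply ContinuousOn.div
        · exact hf.continuousOn.mono hsphereR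
        · exact ((continuous_id.sub continuous_const).pow d).continuousOn
        · exact fun z hz => pow_ne_zero _ (sphere_sub_ne hρ hz)
      · intro z hz
        have hzne := pow_ne_zero d (sphere_sub_ne hρ hz)
        have h1 : f z / (z-k₀)^d - 1 = (f z - (z-k₀)^d)/(z-k₀)^d := by
          field_simp
        rw [h1, norm_div, norm_pow, sphere_abs hρ hz, div_lt_one (by positivity)]
        have h2 := hclose z (hsphereR hz)
        have h3 : δ^d ≤ ρ^d := pow_le_pow_left₀ hδ.le hδρ.le d
        have h4 : (0:ℝ) < ρ^d := by positivity
        calc ‖f z - (z-k₀)^d‖ < δ^d/2 := h2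
          _ ≤ ρ^d/2 := by linarith
          _ < ρ^d := by linarith
    have h1 := hbase.mul hratio
    rw [add_zero] at h1
    have h2 : (d:ℤ) * 1 = (d:ℤ) := by ring
    rw [h2] at h1
    refine CircLift.congr hρ.le (fun z hz => ?_) h1
    rw [mul_comm, div_mul_cancel₀ _ (pow_ne_zero d (sphere_sub_ne hρ hz))]
  have liftN : CircLift k₀ ρ f ((Z.sum mult : ℕ) : ℤ) := by
    have hZρ : ∀ w ∈ Z, dist w k₀ < ρ := fun w hw => lt_trans (mem_ball.1 (hZδ w hw)) hδρ
    have h1 := (circLift_finset hρ Z mult hZρ).mul (circLift_unit hρ hρR hud hunz)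
    rw [add_zero] at h1
    exact CircLift.congr hρ.le (fun z hz => (hufact z (hsphereR hz)).symm) h1
  have hNd : Z.sum mult = d := by
    have := liftN.unique liftd
    exact_mod_cast this
  refine ⟨Z, mult, hZδ, hZiff, ?_, hNd⟩
  intro z hz
  refine ⟨hmultpos z hz, ?_⟩
  have hzball : z ∈ ball k₀ R := ball_subset_ball hδR.le (hZδ z hz)
  classical
  refine ⟨fun w => (∏ w' ∈ Z.erase z, (w - w')^(mult w')) * u w, ?_, ?_, ?_⟩
  · apply AnalyticAt.mul
    · apply Finset.analyticAt_fun_prod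
      intro w _
      exact (analyticAt_id.sub analyticAt_const).pow _
    · exact hud.analyticAt (isOpen_ball.mem_nhds hzball)
  · apply mul_ne_zero
    · rw [Finset.prod_ne_zero_iff]
      intro w hw
      apply pow_ne_zero
      rw [sub_ne_zero]
      exact fun hzw => (Finset.mem_erase.1 hw).1 hzw.symm
    · exact hunz z hzball
  · filter_upwards [isOpen_ball.mem_nhds hzball] with w hw
    rw [hufact w hw, ← Finset.mul_prod_erase Z _ hz]
    ring

end

end ZerosCountAux

/-- Lemma 1 of the paper: stability of the number of zeros (counted with
multiplicity) of a family `g(·, ε)` converging uniformly to `(k - k₀)^d`. -/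
theorem zeros_count_stable
    (m : ℕ) (g : ℂ × (Fin m → ℝ) → ℂ) (k₀ : ℂ) (d : ℕ)
    (ε₀ R : ℝ) (hε₀ : 0 < ε₀) (hR : 0 < R)
    (hhol : ∀ ε : Fin m → ℝ, ‖ε‖ < ε₀ →
      DifferentiableOn ℂ (fun k => g (k, ε)) (ball k₀ R))
    (hucont : ∀ η > (0:ℝ), ∃ δ > (0:ℝ), ∀ ε₁ ε₂ : Fin m → ℝ, ‖ε₁‖ < ε₀ → ‖ε₂‖ < ε₀ →
      ‖ε₁ - ε₂‖ < δ → ∀ k ∈ ball k₀ R, ‖g (k, ε₁) - g (k, ε₂)‖ < η)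
    (hlim : ∀ η > (0:ℝ), ∃ δ > (0:ℝ), ∀ ε : Fin m → ℝ, ‖ε‖ < δ →
      ∀ k ∈ ball k₀ R, ‖g (k, ε) - (k - k₀) ^ d‖ < η) :
    ∃ δ > (0:ℝ), ∃ ε₀' > (0:ℝ), ∀ ε : Fin m → ℝ, ‖ε‖ < ε₀' →
      ∃ (Z : Finset ℂ) (mult : ℂ → ℕ),
        (∀ z ∈ Z, z ∈ ball k₀ δ) ∧
        (∀ z ∈ ball k₀ δ, g (z, ε) = 0 → z ∈ Z) ∧
        (∀ z ∈ Z, 0 < mult z ∧ ∃ h : ℂ → ℂ, AnalyticAt ℂ h z ∧ h z ≠ 0 ∧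
          ∀ᶠ w in nhds z, g (w, ε) = (w - z) ^ (mult z) * h w) ∧
        Z.sum mult = d := by
  have hη : (0:ℝ) < (R/4)^d / 2 := by positivity
  obtain ⟨δ', hδ'pos, hδ'⟩ := hlim ((R/4)^d / 2) hη
  refine ⟨R/4, by positivity, min δ' ε₀, lt_min hδ'pos hε₀, ?_⟩
  intro ε hε
  have hε1 : ‖ε‖ < δ' := lt_of_lt_of_le hε (min_le_left _ _)
  have hε2 : ‖ε‖ < ε₀ := lt_of_lt_of_le hε (min_le_right _ _)
  have hclose : ∀ z ∈ ball k₀ R,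
      ‖g (z, ε) - (z - k₀)^d‖ < (R/4)^d / 2 := by
    intro z hz
    have := hδ' ε hε1 z hz
    exact this
  obtain ⟨Z, mult, hZδ, hZiff, hZmult, hZsum⟩ :=
    ZerosCountAux.count_eq hR (hhol ε hε2) hclose
  refine ⟨Z, mult, hZδ, ?_, hZmult, hZsum⟩
  intro z hz h0
  have hzR : z ∈ ball k₀ R := ball_subset_ball (by linarith) hz
  exact (hZiff z hzR).1 h0
end

section
/- Let n ≥ 2 and consider the (2n + r) × 2n real matrix M whose first 2n rows form the block tridiagonal-like matrix with rows (b₁, -1, 0, …, 0), (-1, b₂, 0, …, 0), (0, 0, b₂, -1, 0, …, 0), (0, 0, -1, b₃, 0, …, 0), …, (0, …, 0, b_n, 0, 0), (0, …, 0, 0, b_n, -1), (0, …, 0, 0, -1, b₁), followed by rows (1, 0, …, 0, 1), (0, 1, 1, 0, …, 0), …, (0, …, 0, 1, 1, 0). If b_j = -1 for all j, then M has rank strictly less than 2n. -/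
lemma sum_two_ite {m : ℕ} (a d : Fin m) (hab : a ≠ d) (p q : ℝ) (v : Fin m → ℝ) :
    ∑ c, (if c = a then p else if c = d then q else 0) * v c = p * v a + q * v d := by
  have : ∀ c : Fin m, (if c = a then p else if c = d then q else 0) * v c =
      (if c = a then p * v a else 0) + (if c = d then q * v d else 0) := by
    intro c
    by_cases h : c = a
    · subst h; simp [hab]
    · by_cases h' : c = d
      · subst h'; simp [h, Ne.symm hab]
      · simp [h, h']
  simp only [this, Finset.sum_add_distrib, Finset.sum_ite_eq', Finset.mem_univ, if_true]

/-- The reduced rank condition for a loop of `n` edges with permutation-invariant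
couplings: if `b_j = -1` for all `j` (δ-couplings), the `(2n+r) × 2n` matrix built
from the loop structure has rank less than `2n`. -/
theorem loop_delta_rank_lt
    (n r : ℕ) (hn : 2 ≤ n) (b : Fin n → ℝ)
    (M : Matrix (Fin (2 * n + r)) (Fin (2 * n)) ℝ)
    (h1 : ∀ (i : Fin (2 * n + r)) (j : Fin n), (i : ℕ) = 2 * (j : ℕ) →
      ∀ c : Fin (2 * n), M i c =
        if (c : ℕ) = 2 * (j : ℕ) then b j
        else if (c : ℕ) = 2 * (j : ℕ) + 1 then -1 else 0)
    (h2 : ∀ (i : Fin (2 * n + r)) (j : Fin n), (i : ℕ) = 2 * (j : ℕ) + 1 →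
      ∀ c : Fin (2 * n), M i c =
        if (c : ℕ) = 2 * (j : ℕ) then -1
        else if (c : ℕ) = 2 * (j : ℕ) + 1 then
          b ⟨((j : ℕ) + 1) % n, Nat.mod_lt _ (by omega)⟩
        else 0)
    (h3 : ∀ i : Fin (2 * n + r), 2 * n ≤ (i : ℕ) → ∃ j : Fin n,
      ∀ c : Fin (2 * n), M i c =
        if (c : ℕ) = 2 * (j : ℕ) + 1 ∨ (c : ℕ) = (2 * (j : ℕ) + 2) % (2 * n)
        then 1 else 0)
    (hb : ∀ j, b j = -1) :
    M.rank < 2 * n := by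
  set v : Fin (2 * n) → ℝ := fun c => (-1 : ℝ) ^ (c : ℕ) with hv
  have hv0 : v ≠ 0 := by
    intro h
    have := congrFun h ⟨0, by omega⟩
    simp [hv] at this
  have hker : M.mulVec v = 0 := by
    funext i
    simp only [Matrix.mulVec, dotProduct, Pi.zero_apply]
    rcases lt_or_ge (i : ℕ) (2 * n) with hi | hi
    · -- i < 2n : i = 2j or 2j+1
      rcases Nat.even_or_odd (i : ℕ) with ⟨j, hj⟩ | ⟨j, hj⟩
      · have hjn : j < n := by omega
        have hrow := h1 i ⟨j, hjn⟩ (by simp; omega)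
        have ha : 2 * j < 2 * n := by omega
        have ha' : 2 * j + 1 < 2 * n := by omega
        have hne : (⟨2 * j, ha⟩ : Fin (2 * n)) ≠ ⟨2 * j + 1, ha'⟩ := by
          simp [Fin.ext_iff]
        have : ∀ c : Fin (2 * n), M i c =
            if c = (⟨2 * j, ha⟩ : Fin (2 * n)) then b ⟨j, hjn⟩
            else if c = ⟨2 * j + 1, ha'⟩ then -1 else 0 := by
          intro c; rw [hrow c]; simp [Fin.ext_iff]
        simp only [this]
        rw [sum_two_ite _ _ hne]
        simp [hv, hb, pow_succ, pow_mul]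
      · have hjn : j < n := by omega
        have hrow := h2 i ⟨j, hjn⟩ (by simp; omega)
        have ha : 2 * j < 2 * n := by omega
        have ha' : 2 * j + 1 < 2 * n := by omega
        have hne : (⟨2 * j, ha⟩ : Fin (2 * n)) ≠ ⟨2 * j + 1, ha'⟩ := by
          simp [Fin.ext_iff]
        have : ∀ c : Fin (2 * n), M i c =
            if c = (⟨2 * j, ha⟩ : Fin (2 * n)) then -1
            else if c = ⟨2 * j + 1, ha'⟩ then
              b ⟨(j + 1) % n, Nat.mod_lt _ (by omega)⟩ else 0 := by
          intro c; rw [hrow c]; simp [Fin.ext_iff]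
        simp only [this]
        rw [sum_two_ite _ _ hne]
        simp [hv, hb, pow_succ, pow_mul]
    · obtain ⟨j, hrow⟩ := h3 i hi
      have ha : 2 * (j : ℕ) + 1 < 2 * n := by omega
      have hmod : (2 * (j : ℕ) + 2) % (2 * n) = 2 * (((j : ℕ) + 1) % n) := by
        have : 2 * (j : ℕ) + 2 = 2 * ((j : ℕ) + 1) := by ring
        rw [this, Nat.mul_mod_mul_left]
      have ha' : (2 * (j : ℕ) + 2) % (2 * n) < 2 * n :=
        Nat.mod_lt _ (by omega)
      have hne : (⟨2 * (j : ℕ) + 1, ha⟩ : Fin (2 * n)) ≠ ⟨_, ha'⟩ := by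
        simp only [ne_eq, Fin.mk.injEq]; rw [hmod]; omega
      have : ∀ c : Fin (2 * n), M i c =
          if c = (⟨2 * (j : ℕ) + 1, ha⟩ : Fin (2 * n)) then 1
          else if c = ⟨_, ha'⟩ then 1 else 0 := by
        intro c; rw [hrow c]
        by_cases h : (c : ℕ) = 2 * (j : ℕ) + 1
        · simp [Fin.ext_iff, h]
        · by_cases h' : (c : ℕ) = (2 * (j : ℕ) + 2) % (2 * n) <;>
            simp [Fin.ext_iff, h, h']
      simp only [this]
      rw [sum_two_ite _ _ hne]
      simp [hv, hmod, pow_succ, pow_mul]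
  -- conclude rank < 2n from nontrivial kernel
  have hfin : M.rank + Module.finrank ℝ (LinearMap.ker M.mulVecLin) = 2 * n := by
    have := LinearMap.finrank_range_add_finrank_ker (M.mulVecLin)
    rw [Matrix.rank] at *
    simpa using this
  have hkpos : 0 < Module.finrank ℝ (LinearMap.ker M.mulVecLin) := by
    rw [Module.finrank_pos_iff_exists_ne_zero]
    exact ⟨⟨v, by simpa [Matrix.mulVecLin] using hker⟩, by
      simp [Submodule.mk_eq_zero]; exact hv0⟩
  omega
end

section
/- Let n ≥ 1 and consider the 2n × 2n real matrix M with rows (1,1,0,…,0), (0,1,-1,0,…,0), (0,0,1,1,0,…,0), (0,0,0,1,-1,0,…,0), …, (0,…,0,1,-1,0), (0,…,0,1,1), (-1,0,…,0,1) (alternating pattern with wrap-around in the last row). Then rank M < 2n if and only if n is even. -/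
open Matrix Module

lemma sum_pair_or {m : ℕ} (v : Fin m → ℝ) (a b : Fin m) (h : a ≠ b) :
    ∑ c, (if c = a ∨ c = b then (1:ℝ) else 0) * v c = v a + v b := by
  have key : ∀ c : Fin m, (if c = a ∨ c = b then (1:ℝ) else 0) * v c
      = (if c = a then v c else 0) + (if c = b then v c else 0) := by
    intro c
    by_cases hca : c = a
    · subst hca; simp [h]
    · by_cases hcb : c = b <;> simp [hca, hcb, Ne.symm h]
  simp_rw [key]
  rw [Finset.sum_add_distrib, Finset.sum_ite_eq', Finset.sum_ite_eq']
  simp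

lemma sum_pair_neg {m : ℕ} (v : Fin m → ℝ) (a b : Fin m) (h : a ≠ b) :
    ∑ c, (if c = a then (1:ℝ) else if c = b then -1 else 0) * v c = v a - v b := by
  have key : ∀ c : Fin m, (if c = a then (1:ℝ) else if c = b then -1 else 0) * v c
      = (if c = a then v c else 0) - (if c = b then v c else 0) := by
    intro c
    by_cases hca : c = a
    · subst hca; simp [h]
    · by_cases hcb : c = b <;> simp [hca, hcb, Ne.symm h]
  simp_rw [key]
  rw [Finset.sum_sub_distrib, Finset.sum_ite_eq', Finset.sum_ite_eq']
  simp

/-- The `2n × 2n` matrix arising from a loop of `n` edges with `δ'_s` couplings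
(rows alternating `(…,1,1,…)` and `(…,1,-1,…)` with wrap-around in the last row)
has rank `< 2n` if and only if `n` is even. -/
theorem loop_delta_prime_rank_iff
    (n : ℕ) (hn : 1 ≤ n)
    (M : Matrix (Fin (2 * n)) (Fin (2 * n)) ℝ)
    (hM : ∀ i c : Fin (2 * n), M i c =
      if (i : ℕ) % 2 = 0 then
        (if (c : ℕ) = (i : ℕ) ∨ (c : ℕ) = (i : ℕ) + 1 then 1 else 0)
      else
        (if (c : ℕ) = (i : ℕ) then 1
         else if (c : ℕ) = ((i : ℕ) + 1) % (2 * n) then -1 else 0)) :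
    M.rank < 2 * n ↔ Even n := by
  have hlt : 0 < 2 * n := by omega
  -- the row equations
  have row : ∀ (v : Fin (2 * n) → ℝ) (i : Fin (2 * n)),
      (M *ᵥ v) i =
        if (i : ℕ) % 2 = 0 then
          v i + v ⟨((i : ℕ) + 1) % (2 * n), Nat.mod_lt _ hlt⟩
        else
          v i - v ⟨((i : ℕ) + 1) % (2 * n), Nat.mod_lt _ hlt⟩ := by
    intro v i
    set b : Fin (2 * n) := ⟨((i : ℕ) + 1) % (2 * n), Nat.mod_lt _ hlt⟩ with hb
    have hbval : (b : ℕ) = ((i : ℕ) + 1) % (2 * n) := rfl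
    have hne : ((i : ℕ) + 1) % (2 * n) ≠ (i : ℕ) := by
      rcases Nat.lt_or_ge ((i : ℕ) + 1) (2 * n) with h | h
      · rw [Nat.mod_eq_of_lt h]; omega
      · have h2 : (i : ℕ) + 1 = 2 * n := by have := i.isLt; omega
        rw [h2, Nat.mod_self]; have := i.isLt; omega
    have hib : i ≠ b := by
      intro hEq
      apply hne
      rw [← hbval, ← hEq]
    show ∑ c, M i c * v c = _
    by_cases hp : (i : ℕ) % 2 = 0
    · rw [if_pos hp]
      have hi1 : (i : ℕ) + 1 < 2 * n := by have := i.isLt; omega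
      have hbv : (b : ℕ) = (i : ℕ) + 1 := by rw [hbval, Nat.mod_eq_of_lt hi1]
      have : ∑ c, M i c * v c = ∑ c, (if c = i ∨ c = b then (1:ℝ) else 0) * v c := by
        refine Finset.sum_congr rfl fun c _ => ?_
        rw [hM i c, if_pos hp]
        congr 1
        refine if_congr ?_ rfl rfl
        rw [Fin.ext_iff, Fin.ext_iff, hbv]
      rw [this, sum_pair_or v i b hib]
    · rw [if_neg hp]
      have : ∑ c, M i c * v c
          = ∑ c, (if c = i then (1:ℝ) else if c = b then -1 else 0) * v c := by
        refine Finset.sum_congr rfl fun c _ => ?_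
        rw [hM i c, if_neg hp]
        have e1 : ((c : ℕ) = (i : ℕ)) = (c = i) := by rw [Fin.ext_iff]
        have e2 : ((c : ℕ) = ((i : ℕ) + 1) % (2 * n)) = (c = b) := by
          rw [Fin.ext_iff, hbval]
        simp only [e1, e2]
      rw [this, sum_pair_neg v i b hib]
  -- rank < 2n iff det = 0
  have rankdet : M.rank < 2 * n ↔ M.det = 0 := by
    constructor
    · intro h
      by_contra hd
      have hu : IsUnit M := (Matrix.isUnit_iff_isUnit_det M).mpr (isUnit_iff_ne_zero.mpr hd)
      have := Matrix.rank_of_isUnit M hu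
      rw [Fintype.card_fin] at this
      omega
    · intro hd
      obtain ⟨v, hv, hMv⟩ := (Matrix.exists_mulVec_eq_zero_iff).mpr hd
      have hker : v ∈ LinearMap.ker M.mulVecLin := by
        rw [LinearMap.mem_ker, Matrix.mulVecLin_apply]; exact hMv
      have h1 : M.rank + finrank ℝ (LinearMap.ker M.mulVecLin) = 2 * n := by
        rw [Matrix.rank, LinearMap.finrank_range_add_finrank_ker]
        simp
      have h2 : 0 < finrank ℝ (LinearMap.ker M.mulVecLin) := by
        rw [finrank_pos_iff_exists_ne_zero]
        exact ⟨⟨v, hker⟩, by simpa using hv⟩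
      omega
  rw [rankdet, ← Matrix.exists_mulVec_eq_zero_iff]
  constructor
  · rintro ⟨v, hv, hMv⟩
    by_contra hodd
    have hn1 : n % 2 = 1 := Nat.odd_iff.mp (Nat.not_even_iff_odd.mp hodd)
    have claim : ∀ j (h : j < 2 * n), v ⟨j, h⟩ = (-1 : ℝ) ^ ((j + 1) / 2) * v ⟨0, hlt⟩ := by
      intro j
      induction j with
      | zero => intro h; simp
      | succ j ih =>
        intro h
        have hj : j < 2 * n := by omega
        have heq : (if j % 2 = 0 then
            v ⟨j, hj⟩ + v ⟨(j + 1) % (2 * n), Nat.mod_lt _ hlt⟩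
          else
            v ⟨j, hj⟩ - v ⟨(j + 1) % (2 * n), Nat.mod_lt _ hlt⟩) = 0 := by
          rw [← row v ⟨j, hj⟩, hMv]; rfl
        have hbv : (j + 1) % (2 * n) = j + 1 := Nat.mod_eq_of_lt h
        have hvb : v ⟨(j + 1) % (2 * n), Nat.mod_lt _ hlt⟩ = v ⟨j + 1, h⟩ := by
          congr 1
          exact Fin.ext hbv
        rw [hvb] at heq
        by_cases hp : j % 2 = 0
        · rw [if_pos hp] at heq
          have hd2 : (j + 2) / 2 = (j + 1) / 2 + 1 := by omega
          have := ih hj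
          rw [hd2, pow_succ]
          nlinarith [this, heq]
        · rw [if_neg hp] at heq
          have hd2 : (j + 2) / 2 = (j + 1) / 2 := by omega
          have := ih hj
          rw [hd2]
          nlinarith [this, heq]
    have h2n1 : 2 * n - 1 < 2 * n := by omega
    have hlast : (if (2 * n - 1) % 2 = 0 then
        v ⟨2 * n - 1, h2n1⟩ + v ⟨(2 * n - 1 + 1) % (2 * n), Nat.mod_lt _ hlt⟩
      else
        v ⟨2 * n - 1, h2n1⟩ - v ⟨(2 * n - 1 + 1) % (2 * n), Nat.mod_lt _ hlt⟩) = 0 := by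
      rw [← row v ⟨2 * n - 1, h2n1⟩, hMv]; rfl
    have hpar : (2 * n - 1) % 2 ≠ 0 := by omega
    rw [if_neg hpar] at hlast
    have hm0 : (2 * n - 1 + 1) % (2 * n) = 0 := by
      have : 2 * n - 1 + 1 = 2 * n := by omega
      rw [this, Nat.mod_self]
    have hv0eq : v ⟨(2 * n - 1 + 1) % (2 * n), Nat.mod_lt _ hlt⟩ = v ⟨0, hlt⟩ := by
      congr 1
      exact Fin.ext hm0
    rw [hv0eq] at hlast
    have hcl := claim (2 * n - 1) h2n1
    have hexp : (2 * n - 1 + 1) / 2 = n := by omega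
    rw [hexp] at hcl
    have hpow : (-1 : ℝ) ^ n = -1 := Odd.neg_one_pow (Nat.odd_iff.mpr hn1)
    rw [hpow] at hcl
    have hv0 : v ⟨0, hlt⟩ = 0 := by nlinarith [hcl, hlast]
    apply hv
    funext j
    have := claim (j : ℕ) j.isLt
    rw [Fin.eta] at this
    rw [this, hv0, mul_zero]
    rfl
  · intro heven
    refine ⟨fun j => (-1 : ℝ) ^ (((j : ℕ) + 1) / 2), ?_, ?_⟩
    · intro h0
      have := congrFun h0 ⟨0, hlt⟩
      simp at this
    · funext i
      show (M *ᵥ _) i = 0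
      rw [row]
      by_cases hp : (i : ℕ) % 2 = 0
      · rw [if_pos hp]
        have hi1 : (i : ℕ) + 1 < 2 * n := by have := i.isLt; omega
        have hbv : ((i : ℕ) + 1) % (2 * n) = (i : ℕ) + 1 := Nat.mod_eq_of_lt hi1
        simp only [hbv]
        have hd2 : ((i : ℕ) + 1 + 1) / 2 = ((i : ℕ) + 1) / 2 + 1 := by omega
        rw [hd2, pow_succ]
        ring
      · rw [if_neg hp]
        rcases Nat.lt_or_ge ((i : ℕ) + 1) (2 * n) with hcase | hcase
        · have hbv : ((i : ℕ) + 1) % (2 * n) = (i : ℕ) + 1 := Nat.mod_eq_of_lt hcase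
          simp only [hbv]
          have hd2 : ((i : ℕ) + 1 + 1) / 2 = ((i : ℕ) + 1) / 2 := by omega
          rw [hd2, sub_self]
        · have h2 : (i : ℕ) + 1 = 2 * n := by have := i.isLt; omega
          have hbv : ((i : ℕ) + 1) % (2 * n) = 0 := by rw [h2, Nat.mod_self]
          simp only [hbv]
          have he1 : ((i : ℕ) + 1) / 2 = n := by omega
          rw [he1]
          have : (-1 : ℝ) ^ n = 1 := Even.neg_one_pow heven
          rw [this]
          norm_num
end

section
/- Let α ∈ ℝ, α ≠ 0, l > 0, λ ∈ [0,1]. A nonzero real number k solves 2k sin(2kl) + (α - 2ik)(cos(2klλ) - cos(2kl)) = 0 if and only if kl = nπ/2 for some nonzero integer n and nλ = n - 2m for some integer m (equivalently λ = 1 - 2m/n). In particular, real nonzero solutions require both sin(2kl) = 0 and cos(2klλ) = cos(2kl). -/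
/-- Characterization of real nonzero solutions of the cross-shaped resonator
condition: `k` solves `2k sin(2kl) + (α - 2ik)(cos(2klλ) - cos(2kl)) = 0`
iff `kl = nπ/2` for some nonzero integer `n` and `nλ = n - 2m` for some
integer `m`. -/
theorem cross_real_solutions
    (α l lam k : ℝ) (hα : α ≠ 0) (hl : 0 < l)
    (hlam : lam ∈ Set.Icc (0 : ℝ) 1) (hk : k ≠ 0) :
    (2 * (k : ℂ) * Complex.sin (2 * (k : ℂ) * (l : ℂ))
        + ((α : ℂ) - 2 * Complex.I * (k : ℂ))
          * (Complex.cos (2 * (k : ℂ) * (l : ℂ) * (lam : ℂ))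
              - Complex.cos (2 * (k : ℂ) * (l : ℂ))) = 0
      ↔
      ∃ n : ℤ, n ≠ 0 ∧ k * l = (n : ℝ) * Real.pi / 2 ∧
        ∃ m : ℤ, (n : ℝ) * lam = (n : ℝ) - 2 * (m : ℝ)) := by
  set s : ℝ := Real.sin (2 * k * l) with hs
  set c1 : ℝ := Real.cos (2 * k * l * lam) with hc1
  set c2 : ℝ := Real.cos (2 * k * l) with hc2
  have key : (2 * (k : ℂ) * Complex.sin (2 * (k : ℂ) * (l : ℂ))
        + ((α : ℂ) - 2 * Complex.I * (k : ℂ))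
          * (Complex.cos (2 * (k : ℂ) * (l : ℂ) * (lam : ℂ))
              - Complex.cos (2 * (k : ℂ) * (l : ℂ))))
      = ((2 * k * s + α * (c1 - c2) : ℝ) : ℂ)
        + ((-(2 * k * (c1 - c2)) : ℝ) : ℂ) * Complex.I := by
    rw [hs, hc1, hc2]
    push_cast
    ring
  rw [key]
  have hzero : (((2 * k * s + α * (c1 - c2) : ℝ) : ℂ)
        + ((-(2 * k * (c1 - c2)) : ℝ) : ℂ) * Complex.I = 0)
      ↔ (s = 0 ∧ c1 = c2) := by
    rw [Complex.ext_iff]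
    simp only [Complex.add_re, Complex.add_im, Complex.ofReal_re, Complex.ofReal_im,
      Complex.mul_re, Complex.mul_im, Complex.I_re, Complex.I_im, Complex.zero_re,
      Complex.zero_im]
    constructor
    · rintro ⟨h1, h2⟩
      have hc : c1 = c2 := by
        have : 2 * k * (c1 - c2) = 0 := by linarith
        have := mul_eq_zero.mp this
        rcases this with h | h
        · exact absurd h (by positivity)
        · linarith
      refine ⟨?_, hc⟩
      have : 2 * k * s = 0 := by rw [hc] at h1; linarith
      rcases mul_eq_zero.mp this with h | h
      · exact absurd h (by positivity)
      · exact h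
    · rintro ⟨h1, h2⟩
      constructor
      · rw [h1, h2]; ring
      · rw [h2]; ring
  rw [hzero]
  constructor
  · rintro ⟨hsz, hcz⟩
    obtain ⟨n, hn⟩ := Real.sin_eq_zero_iff.mp hsz
    have hn0 : n ≠ 0 := by
      rintro rfl
      simp at hn
      rcases hn with h | h
      · exact hk h
      · exact hl.ne' h
    refine ⟨n, hn0, by linarith, ?_⟩
    rw [hc1, hc2] at hcz
    rw [Real.cos_eq_cos_iff] at hcz
    obtain ⟨j, hj | hj⟩ := hcz
    · -- 2kl = 2jπ + 2klλ
      refine ⟨j, ?_⟩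
      have hπ : Real.pi ≠ 0 := Real.pi_ne_zero
      have h2 : (n : ℝ) * Real.pi = 2 * j * Real.pi + (n : ℝ) * Real.pi * lam := by
        rw [← hn] at hj; linarith [hj]
      have := mul_right_cancel₀ hπ (by linarith [h2] :
        ((n : ℝ) * lam) * Real.pi = ((n : ℝ) - 2 * j) * Real.pi)
      linarith [this]
    · -- 2klλ = 2jπ - 2kl
      refine ⟨n - j, ?_⟩
      have hπ : Real.pi ≠ 0 := Real.pi_ne_zero
      have h2 : (n : ℝ) * Real.pi * lam = 2 * j * Real.pi - (n : ℝ) * Real.pi := by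
        rw [← hn] at hj; linarith [hj]
      have := mul_right_cancel₀ hπ (by push_cast; linarith [h2] :
        ((n : ℝ) * lam) * Real.pi = ((n : ℝ) - 2 * ((n : ℝ) - (j : ℝ))) * Real.pi)
      push_cast
      linarith [this]
  · rintro ⟨n, hn0, hkl, m, hm⟩
    have h2kl : 2 * k * l = (n : ℝ) * Real.pi := by linarith
    constructor
    · rw [hs, h2kl]
      exact Real.sin_int_mul_pi n
    · rw [hc1, hc2, h2kl]
      have : (n : ℝ) * Real.pi * lam = (n : ℝ) * Real.pi - m * (2 * Real.pi) := by
        have : ((n : ℝ) * lam) * Real.pi = ((n : ℝ) - 2 * m) * Real.pi := by rw [hm]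
        linarith [this]
      rw [this, Real.cos_sub_int_mul_two_pi]
end

section
/- Let U = (U₁ U₂; U₃ U₄) be a block matrix with U₁ of size 2N×2N and U₄ of size M×M, and let k ∈ ℂ be such that (1-k)U₄ - (1+k)I is invertible. If vectors f, f' ∈ ℂ^{2N} and g ∈ ℂ^M satisfy (U₁ - I)f + i(U₁+I)f' + (1-k)U₂ g = 0 and U₃ f + iU₃ f' + [(1-k)U₄ - (k+1)I] g = 0, then g = -[(1-k)U₄ - (k+1)I]⁻¹ U₃ (f + if') and the reduced condition (Ũ(k) - I)f + i(Ũ(k)+I)f' = 0 holds, where Ũ(k) = U₁ - (1-k)U₂[(1-k)U₄ - (k+1)I]⁻¹ U₃. -/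
open Matrix

/-- Elimination of the external variables: for a block coupling matrix
`U = (U₁ U₂; U₃ U₄)` and `k` with `(1-k)U₄ - (1+k)I` invertible, the coupled
equations determine `g` and yield the effective coupling condition with
`Ũ(k) = U₁ - (1-k)U₂[(1-k)U₄ - (k+1)I]⁻¹U₃`. -/
theorem effective_coupling
    (N M : ℕ)
    (U₁ : Matrix (Fin (2 * N)) (Fin (2 * N)) ℂ) (U₂ : Matrix (Fin (2 * N)) (Fin M) ℂ)
    (U₃ : Matrix (Fin M) (Fin (2 * N)) ℂ) (U₄ : Matrix (Fin M) (Fin M) ℂ)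
    (k : ℂ)
    (hinv : IsUnit ((1 - k) • U₄ - (1 + k) • (1 : Matrix (Fin M) (Fin M) ℂ)).det)
    (f f' : Fin (2 * N) → ℂ) (g : Fin M → ℂ)
    (h1 : (U₁ - 1) *ᵥ f + Complex.I • ((U₁ + 1) *ᵥ f') + (1 - k) • (U₂ *ᵥ g) = 0)
    (h2 : U₃ *ᵥ f + Complex.I • (U₃ *ᵥ f')
        + ((1 - k) • U₄ - (1 + k) • 1) *ᵥ g = 0) :
    g = -(((1 - k) • U₄ - (1 + k) • 1)⁻¹ *ᵥ (U₃ *ᵥ (f + Complex.I • f'))) ∧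
    ((U₁ - (1 - k) • (U₂ * ((1 - k) • U₄ - (1 + k) • 1)⁻¹ * U₃) - 1) *ᵥ f
      + Complex.I • ((U₁ - (1 - k) • (U₂ * ((1 - k) • U₄ - (1 + k) • 1)⁻¹ * U₃) + 1) *ᵥ f')
      = 0) := by
  set A : Matrix (Fin M) (Fin M) ℂ := (1 - k) • U₄ - (1 + k) • 1 with hA
  have hAg : A *ᵥ g = -(U₃ *ᵥ (f + Complex.I • f')) := by
    have := h2
    rw [Matrix.mulVec_add, Matrix.mulVec_smul]
    linear_combination (norm := module) this
  have hg : g = -(A⁻¹ *ᵥ (U₃ *ᵥ (f + Complex.I • f'))) := by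
    calc g = A⁻¹ *ᵥ (A *ᵥ g) := by
            rw [Matrix.mulVec_mulVec, Matrix.nonsing_inv_mul A hinv, Matrix.one_mulVec]
      _ = -(A⁻¹ *ᵥ (U₃ *ᵥ (f + Complex.I • f'))) := by rw [hAg, Matrix.mulVec_neg]
  refine ⟨hg, ?_⟩
  have key : ((1 - k) • (U₂ * A⁻¹ * U₃)) *ᵥ (f + Complex.I • f') = -((1 - k) • (U₂ *ᵥ g)) := by
    rw [Matrix.smul_mulVec, Matrix.mul_assoc, ← Matrix.mulVec_mulVec,
      ← Matrix.mulVec_mulVec, hg, Matrix.mulVec_neg]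
    module
  have expand : ((U₁ - (1 - k) • (U₂ * A⁻¹ * U₃) - 1) *ᵥ f
      + Complex.I • ((U₁ - (1 - k) • (U₂ * A⁻¹ * U₃) + 1) *ᵥ f'))
      = ((U₁ - 1) *ᵥ f + Complex.I • ((U₁ + 1) *ᵥ f') + (1 - k) • (U₂ *ᵥ g))
        - (((1 - k) • (U₂ * A⁻¹ * U₃)) *ᵥ (f + Complex.I • f') + (1 - k) • (U₂ *ᵥ g)) := by
    simp only [Matrix.sub_mulVec, Matrix.add_mulVec, Matrix.mulVec_add, Matrix.mulVec_smul,
      Matrix.smul_mulVec]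
    module
  rw [expand, h1, key]
  module
end
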